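/- Let 1 < q ≤ p < ∞ and let X = f_{p,q} be the space of sequences x = (x_I) indexed by dyadic rectangles with norm ‖x‖ = ‖(Σ_I |x_I 𝟙_{I,p}|^q)^{1/q}‖_{L^p}, where 𝟙_{I,p} = |I|^{−1/p} 𝟙_I. If x₀, x₁, x₂, … ∈ X have pairwise disjoint supports, then ‖Σ_n x_n‖ ≤ (Σ_n ‖x_n‖^q)^{1/q}. -/

import Mathlib

open MeasureTheory
open scoped ENNReal

/-- A dyadic rectangle `I = I₁ × … × I_d ⊆ [0,1]^d`, where
`I_i = 2^{-j_i}(k_i + [0,1))` with `k_i < 2^{j_i}`. -/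
structure DyadicRect (d : ℕ) where
  j : Fin d → ℕ
  k : Fin d → ℕ
  hk : ∀ i, k i < 2 ^ j i

namespace DyadicRect

/-- The rectangle as a subset of `ℝ^d`. -/
def toSet {d : ℕ} (I : DyadicRect d) : Set (Fin d → ℝ) :=
  {u | ∀ i, (I.k i : ℝ) / 2 ^ I.j i ≤ u i ∧ u i < ((I.k i : ℝ) + 1) / 2 ^ I.j i}

/-- The volume `|I| = ∏ 2^{-j_i}`. -/
noncomputable def vol {d : ℕ} (I : DyadicRect d) : ℝ := ∏ i, ((2 : ℝ) ^ I.j i)⁻¹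

/-- The `L^p`-normalized indicator `𝟙_{I,p} = |I|^{-1/p} 𝟙_I`. -/
noncomputable def indp {d : ℕ} (p : ℝ) (I : DyadicRect d) (u : Fin d → ℝ) : ℝ :=
  I.vol ^ (-(1 / p)) * I.toSet.indicator (fun _ => (1 : ℝ)) u

end DyadicRect

/-- The square-type function `S_q x (u) = (Σ_I |x_I 𝟙_{I,p}(u)|^q)^{1/q}`. -/
noncomputable def Sq {d : ℕ} {𝕜 : Type*} [RCLike 𝕜] (p q : ℝ)
    (x : DyadicRect d → 𝕜) (u : Fin d → ℝ) : ℝ :=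
  (∑' I, (‖x I‖ * DyadicRect.indp p I u) ^ q) ^ (1 / q)

/-- The `f_{p,q}` norm `‖x‖ = ‖S_q x‖_{L^p}`. -/
noncomputable def fpqNorm {d : ℕ} {𝕜 : Type*} [RCLike 𝕜] (p q : ℝ)
    (x : DyadicRect d → 𝕜) : ℝ :=
  (∫ u, Sq p q x u ^ p) ^ (1 / p)

section Aux

instance {d : ℕ} : Countable (DyadicRect d) := by
  have h : Function.Injective (fun I : DyadicRect d => (I.j, I.k)) := by
    rintro ⟨j1, k1, h1⟩ ⟨j2, k2, h2⟩ h
    simp only [Prod.mk.injEq] at h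
    obtain ⟨rfl, rfl⟩ := h
    rfl
  exact h.countable

variable {d : ℕ}

lemma DyadicRect.toSet_eq (I : DyadicRect d) :
    I.toSet = Set.univ.pi fun i =>
      Set.Ico ((I.k i : ℝ) / 2 ^ I.j i) (((I.k i : ℝ) + 1) / 2 ^ I.j i) := by
  ext u
  simp [DyadicRect.toSet, Set.mem_pi, Set.mem_Ico]

lemma DyadicRect.measurableSet_toSet (I : DyadicRect d) : MeasurableSet I.toSet := by
  rw [DyadicRect.toSet_eq]
  exact MeasurableSet.univ_pi fun i => measurableSet_Ico

lemma DyadicRect.indp_nonneg (p : ℝ) (I : DyadicRect d) (u : Fin d → ℝ) :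
    0 ≤ DyadicRect.indp p I u := by
  apply mul_nonneg
  · apply Real.rpow_nonneg
    exact Finset.prod_nonneg fun i _ => by positivity
  · exact Set.indicator_nonneg (fun _ _ => zero_le_one) u

lemma DyadicRect.measurable_indp (p : ℝ) (I : DyadicRect d) :
    Measurable (DyadicRect.indp p I) :=
  measurable_const.mul (Measurable.indicator measurable_const I.measurableSet_toSet)

/-- The `ENNReal`-valued version of `Sq^q`. -/
noncomputable def Tq (p q : ℝ) (y : DyadicRect d → ℝ) (u : Fin d → ℝ) : ℝ≥0∞ :=
  ∑' I, ENNReal.ofReal ((‖y I‖ * DyadicRect.indp p I u) ^ q)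

lemma term_nonneg (p q : ℝ) (y : DyadicRect d → ℝ) (u : Fin d → ℝ) (I : DyadicRect d) :
    0 ≤ (‖y I‖ * DyadicRect.indp p I u) ^ q :=
  Real.rpow_nonneg (mul_nonneg (norm_nonneg _) (DyadicRect.indp_nonneg p I u)) q

lemma measurable_Tq (p q : ℝ) (y : DyadicRect d → ℝ) : Measurable (Tq p q y) :=
  Measurable.ennreal_tsum fun I =>
    ((measurable_const.mul (DyadicRect.measurable_indp p I)).pow measurable_const).ennreal_ofReal

lemma tsum_real_eq_toReal {ι : Type*} (f : ι → ℝ) (hf : ∀ i, 0 ≤ f i) :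
    ∑' i, f i = (∑' i, ENNReal.ofReal (f i)).toReal := by
  by_cases hs : Summable f
  · rw [← ENNReal.ofReal_tsum_of_nonneg hf hs, ENNReal.toReal_ofReal (tsum_nonneg hf)]
  · rw [tsum_eq_zero_of_not_summable hs]
    have hT : ∑' i, ENNReal.ofReal (f i) = ⊤ := by
      by_contra hT
      have h2 := ENNReal.summable_toReal hT
      rw [show (fun i => (ENNReal.ofReal (f i)).toReal) = f from
        funext fun i => ENNReal.toReal_ofReal (hf i)] at h2
      exact hs h2
    simp [hT]

lemma Sq_eq_toReal (p q : ℝ) (y : DyadicRect d → ℝ) (u : Fin d → ℝ) :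
    Sq p q y u = (Tq p q y u).toReal ^ (1 / q) := by
  rw [Sq, tsum_real_eq_toReal _ (term_nonneg p q y u), Tq]

lemma Sq_nonneg (p q : ℝ) (y : DyadicRect d → ℝ) (u : Fin d → ℝ) : 0 ≤ Sq p q y u :=
  Real.rpow_nonneg (tsum_nonneg (term_nonneg p q y u)) _

lemma Sq_rpow_q (p q : ℝ) (hq : 0 < q) (y : DyadicRect d → ℝ) (u : Fin d → ℝ) :
    Sq p q y u ^ q = (Tq p q y u).toReal := by
  rw [Sq_eq_toReal p q y u, ← Real.rpow_mul ENNReal.toReal_nonneg,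
    one_div_mul_cancel hq.ne', Real.rpow_one]

end Aux

lemma ennreal_iSup_rpow (a : ℕ → ℝ≥0∞) {s : ℝ} (hs : 0 < s) :
    (⨆ n, a n) ^ s = ⨆ n, a n ^ s := by
  apply le_antisymm
  · have h1 : ∀ n, a n ≤ (⨆ m, a m ^ s) ^ (1 / s) := by
      intro n
      have h2 : a n = (a n ^ s) ^ (1 / s) := by
        rw [← ENNReal.rpow_mul, mul_one_div_cancel hs.ne', ENNReal.rpow_one]
      rw [h2]
      exact ENNReal.rpow_le_rpow (le_iSup (fun m => a m ^ s) n) (by positivity)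
    calc (⨆ n, a n) ^ s ≤ ((⨆ m, a m ^ s) ^ (1 / s)) ^ s :=
          ENNReal.rpow_le_rpow (iSup_le h1) hs.le
      _ = ⨆ m, a m ^ s := by
          rw [← ENNReal.rpow_mul, one_div_mul_cancel hs.ne', ENNReal.rpow_one]
  · exact iSup_le fun n => ENNReal.rpow_le_rpow (le_iSup a n) hs.le

lemma mink_finset {α : Type*} [MeasurableSpace α] {μ : Measure α}
    {g : ℕ → α → ℝ≥0∞} (hg : ∀ n, Measurable (g n)) {r : ℝ} (hr : 1 ≤ r)
    (t : Finset ℕ) :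
    (∫⁻ u, (∑ n ∈ t, g n u) ^ r ∂μ) ^ (1 / r) ≤
      ∑ n ∈ t, (∫⁻ u, g n u ^ r ∂μ) ^ (1 / r) := by
  have hr0 : 0 < r := lt_of_lt_of_le one_pos hr
  induction t using Finset.induction with
  | empty =>
      simp [ENNReal.zero_rpow_of_pos hr0,
        ENNReal.zero_rpow_of_pos (show (0:ℝ) < 1 / r by positivity), hr0]
  | @insert a t ha ih =>
      rw [Finset.sum_insert ha]
      have hfun : (fun u => ∑ n ∈ insert a t, g n u) =
          (g a + fun u => ∑ n ∈ t, g n u) := by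
        funext u
        simp [Finset.sum_insert ha]
      calc (∫⁻ u, (∑ n ∈ insert a t, g n u) ^ r ∂μ) ^ (1 / r)
          = (∫⁻ u, (g a + fun v => ∑ n ∈ t, g n v) u ^ r ∂μ) ^ (1 / r) := by
            rw [show (fun u => (∑ n ∈ insert a t, g n u) ^ r) =
              (fun u => (g a + fun v => ∑ n ∈ t, g n v) u ^ r) from by
                funext u; rw [congrFun hfun u]]
        _ ≤ (∫⁻ u, g a u ^ r ∂μ) ^ (1 / r) +
              (∫⁻ u, (∑ n ∈ t, g n u) ^ r ∂μ) ^ (1 / r) :=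
            ENNReal.lintegral_Lp_add_le (hg a).aemeasurable
              (Finset.measurable_sum t fun n _ => hg n).aemeasurable hr
        _ ≤ (∫⁻ u, g a u ^ r ∂μ) ^ (1 / r) +
              ∑ n ∈ t, (∫⁻ u, g n u ^ r ∂μ) ^ (1 / r) := add_le_add_right ih _

lemma mink_tsum {α : Type*} [MeasurableSpace α] {μ : Measure α}
    {g : ℕ → α → ℝ≥0∞} (hg : ∀ n, Measurable (g n)) {r : ℝ} (hr : 1 ≤ r) :
    (∫⁻ u, (∑' n, g n u) ^ r ∂μ) ^ (1 / r) ≤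
      ∑' n, (∫⁻ u, g n u ^ r ∂μ) ^ (1 / r) := by
  have hr0 : 0 < r := lt_of_lt_of_le one_pos hr
  have hsm : ∀ N, Measurable fun u => (∑ n ∈ Finset.range N, g n u) ^ r := fun N =>
    (Finset.measurable_sum _ fun n _ => hg n).pow measurable_const
  have hmono : Monotone fun N => fun u => (∑ n ∈ Finset.range N, g n u) ^ r := by
    intro N M h u
    exact ENNReal.rpow_le_rpow
      (Finset.sum_le_sum_of_subset (Finset.range_subset_range.2 h)) hr0.le
  have key : ∫⁻ u, (∑' n, g n u) ^ r ∂μ =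
      ⨆ N, ∫⁻ u, (∑ n ∈ Finset.range N, g n u) ^ r ∂μ := by
    rw [← lintegral_iSup hsm hmono]
    congr 1
    funext u
    rw [ENNReal.tsum_eq_iSup_nat, ennreal_iSup_rpow _ hr0]
  rw [key, ennreal_iSup_rpow _ (by positivity : (0:ℝ) < 1 / r)]
  apply iSup_le
  intro N
  exact (mink_finset hg hr (Finset.range N)).trans
    (ENNReal.sum_le_tsum (Finset.range N))
/-- For `1 < q ≤ p < ∞`: if `x₀, x₁, x₂, …` in `f_{p,q}` have pairwise disjoint
supports, then `‖Σ_n x_n‖ ≤ (Σ_n ‖x_n‖^q)^{1/q}`. -/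
theorem stmt_10 {d : ℕ} (p q : ℝ) (hq : 1 < q) (hqp : q ≤ p)
    (x : ℕ → DyadicRect d → ℝ)
    (hdisj : ∀ m n, m ≠ n → ∀ I, x m I = 0 ∨ x n I = 0)
    (hmem1 : ∀ n u, Summable fun I => (‖x n I‖ * DyadicRect.indp p I u) ^ q)
    (hmem2 : ∀ n, MeasureTheory.Integrable fun u => Sq p q (x n) u ^ p)
    (hsum : Summable fun n => fpqNorm p q (x n) ^ q) :
    fpqNorm p q (fun I => ∑' n, x n I) ≤ (∑' n, fpqNorm p q (x n) ^ q) ^ (1 / q) := by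
  have hq0 : 0 < q := lt_trans one_pos hq
  have hp0 : 0 < p := lt_of_lt_of_le hq0 hqp
  set r : ℝ := p / q with hr_def
  have hr1 : 1 ≤ r := (one_le_div hq0).2 hqp
  have hr0 : 0 < r := lt_of_lt_of_le one_pos hr1
  have hqr : q * r = p := by rw [hr_def, mul_comm]; exact div_mul_cancel₀ p hq0.ne'
  -- per-rectangle disjointness identity
  have hpt : ∀ (I : DyadicRect d) (u : Fin d → ℝ),
      ENNReal.ofReal ((‖∑' n, x n I‖ * DyadicRect.indp p I u) ^ q) =
      ∑' n, ENNReal.ofReal ((‖x n I‖ * DyadicRect.indp p I u) ^ q) := by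
    intro I u
    by_cases hz : ∀ n, x n I = 0
    · have h0 : ∀ n, ENNReal.ofReal ((‖x n I‖ * DyadicRect.indp p I u) ^ q) = 0 := by
        intro n; rw [hz n]; simp [Real.zero_rpow hq0.ne']
      rw [show (∑' n, x n I) = 0 from by
          rw [show (fun n => x n I) = fun _ => (0 : ℝ) from funext hz]; exact tsum_zero,
        tsum_congr h0]
      simp [Real.zero_rpow hq0.ne']
    · push_neg at hz
      obtain ⟨m, hm⟩ := hz
      have hzero : ∀ n, n ≠ m → x n I = 0 := fun n hn =>
        ((hdisj m n (Ne.symm hn)) I).resolve_left hm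
      rw [tsum_eq_single m hzero,
        tsum_eq_single m (fun n hn => by rw [hzero n hn]; simp [Real.zero_rpow hq0.ne'])]
  -- total Tq as a sum of the Tq's
  have hTtot : ∀ u, Tq p q (fun I => ∑' n, x n I) u = ∑' n, Tq p q (x n) u := by
    intro u
    calc Tq p q (fun I => ∑' n, x n I) u
        = ∑' (I : DyadicRect d), ∑' n,
            ENNReal.ofReal ((‖x n I‖ * DyadicRect.indp p I u) ^ q) :=
          tsum_congr fun I => hpt I u
      _ = ∑' n, Tq p q (x n) u := ENNReal.tsum_comm
  -- value of Tq for each x n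
  have hTn : ∀ n u, Tq p q (x n) u = ENNReal.ofReal (Sq p q (x n) u ^ q) := by
    intro n u
    have hfin : Tq p q (x n) u ≠ ⊤ := by
      simp only [Tq]
      rw [← ENNReal.ofReal_tsum_of_nonneg (term_nonneg p q (x n) u) (hmem1 n u)]
      exact ENNReal.ofReal_ne_top
    rw [Sq_rpow_q p q hq0, ENNReal.ofReal_toReal hfin]
  -- pointwise bound for the total function
  have hle : ∀ u, ENNReal.ofReal (Sq p q (fun I => ∑' n, x n I) u ^ p) ≤
      (∑' n, Tq p q (x n) u) ^ r := by
    intro u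
    rw [← hTtot u]
    have h1 : Sq p q (fun I => ∑' n, x n I) u ^ p
        = (Sq p q (fun I => ∑' n, x n I) u ^ q) ^ r := by
      rw [← Real.rpow_mul (Sq_nonneg p q _ u), hqr]
    rw [h1, ← ENNReal.ofReal_rpow_of_nonneg
      (Real.rpow_nonneg (Sq_nonneg p q _ u) q) hr0.le]
    apply ENNReal.rpow_le_rpow _ hr0.le
    rw [Sq_rpow_q p q hq0]
    exact ENNReal.ofReal_toReal_le
  have hint_nonneg : ∀ n, 0 ≤ ∫ u, Sq p q (x n) u ^ p :=
    fun n => integral_nonneg fun u => Real.rpow_nonneg (Sq_nonneg p q _ u) p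
  have hfpq_nonneg : ∀ n, 0 ≤ fpqNorm p q (x n) :=
    fun n => Real.rpow_nonneg (hint_nonneg n) _
  have hfpq_pow : ∀ n, fpqNorm p q (x n) ^ p = ∫ u, Sq p q (x n) u ^ p := by
    intro n
    simp only [fpqNorm]
    rw [← Real.rpow_mul (hint_nonneg n), one_div_mul_cancel hp0.ne', Real.rpow_one]
  have hlint : ∀ n, ∫⁻ u, (Tq p q (x n) u) ^ r =
      ENNReal.ofReal (fpqNorm p q (x n) ^ p) := by
    intro n
    have h1 : ∀ u, (Tq p q (x n) u) ^ r = ENNReal.ofReal (Sq p q (x n) u ^ p) := by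
      intro u
      rw [hTn n u, ENNReal.ofReal_rpow_of_nonneg
        (Real.rpow_nonneg (Sq_nonneg p q _ u) q) hr0.le,
        ← Real.rpow_mul (Sq_nonneg p q _ u), hqr]
    simp_rw [h1]
    rw [← ofReal_integral_eq_lintegral_ofReal (hmem2 n)
      (Filter.Eventually.of_forall fun u => Real.rpow_nonneg (Sq_nonneg p q _ u) p),
      hfpq_pow n]
  have hlint' : ∀ n, (∫⁻ u, (Tq p q (x n) u) ^ r) ^ (1 / r) =
      ENNReal.ofReal (fpqNorm p q (x n) ^ q) := by
    intro n
    rw [hlint n, ENNReal.ofReal_rpow_of_nonneg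
      (Real.rpow_nonneg (hfpq_nonneg n) p) (by positivity),
      ← Real.rpow_mul (hfpq_nonneg n)]
    congr 2
    rw [hr_def]
    field_simp
  have hmeasT : Measurable (Tq p q (fun I => ∑' n, x n I)) := measurable_Tq p q _
  have hSqmeas : AEStronglyMeasurable
      (fun u => Sq p q (fun I => ∑' n, x n I) u ^ p) volume := by
    apply Measurable.aestronglyMeasurable
    have h2 : (fun u => Sq p q (fun I => ∑' n, x n I) u ^ p)
        = fun u => ((Tq p q (fun I => ∑' n, x n I) u).toReal ^ (1 / q)) ^ p := by
      funext u; rw [Sq_eq_toReal]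
    rw [h2]
    exact (hmeasT.ennreal_toReal.pow measurable_const).pow measurable_const
  set S := ∑' n, fpqNorm p q (x n) ^ q with hS_def
  have hS0 : 0 ≤ S := tsum_nonneg fun n => Real.rpow_nonneg (hfpq_nonneg n) q
  have hmain : ∫⁻ u, ENNReal.ofReal (Sq p q (fun I => ∑' n, x n I) u ^ p) ≤
      ENNReal.ofReal (S ^ r) := by
    calc ∫⁻ u, ENNReal.ofReal (Sq p q (fun I => ∑' n, x n I) u ^ p)
        ≤ ∫⁻ u, (∑' n, Tq p q (x n) u) ^ r := lintegral_mono hle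
      _ ≤ (∑' n, (∫⁻ u, (Tq p q (x n) u) ^ r) ^ (1 / r)) ^ r := by
          have h2 := mink_tsum (μ := volume) (fun n => measurable_Tq p q (x n)) hr1
          calc ∫⁻ u, (∑' n, Tq p q (x n) u) ^ r
              = ((∫⁻ u, (∑' n, Tq p q (x n) u) ^ r) ^ (1 / r)) ^ r := by
                rw [← ENNReal.rpow_mul, one_div_mul_cancel hr0.ne', ENNReal.rpow_one]
            _ ≤ _ := ENNReal.rpow_le_rpow h2 hr0.le
      _ = (∑' n, ENNReal.ofReal (fpqNorm p q (x n) ^ q)) ^ r := by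
          rw [tsum_congr hlint']
      _ = (ENNReal.ofReal S) ^ r := by
          rw [← ENNReal.ofReal_tsum_of_nonneg
            (fun n => Real.rpow_nonneg (hfpq_nonneg n) q) hsum]
      _ = ENNReal.ofReal (S ^ r) := ENNReal.ofReal_rpow_of_nonneg hS0 hr0.le
  have hXle : (∫⁻ u, ENNReal.ofReal
      (Sq p q (fun I => ∑' n, x n I) u ^ p)).toReal ≤ S ^ r := by
    have h3 := ENNReal.toReal_mono ENNReal.ofReal_ne_top hmain
    rwa [ENNReal.toReal_ofReal (Real.rpow_nonneg hS0 r)] at h3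
  simp only [fpqNorm]
  rw [integral_eq_lintegral_of_nonneg_ae
    (Filter.Eventually.of_forall fun u => Real.rpow_nonneg (Sq_nonneg p q _ u) p) hSqmeas]
  calc (∫⁻ u, ENNReal.ofReal
        (Sq p q (fun I => ∑' n, x n I) u ^ p)).toReal ^ (1 / p)
      ≤ (S ^ r) ^ (1 / p) :=
        Real.rpow_le_rpow ENNReal.toReal_nonneg hXle (by positivity)
    _ = S ^ (1 / q) := by
        rw [← Real.rpow_mul hS0]
        congr 1
        rw [hr_def]
        field_simp
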